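/- Let d be a positive even integer. If ε and δ are two finitely supported sequences both satisfying the Chung–Graham rule of expansion for even interval d and Σ_k ε_k · F_{2+d(k-1)} = Σ_k δ_k · F_{2+d(k-1)}, then ε = δ. -/

import Mathlib

/-- Lucas sequence: K 1 = 1, K 2 = 3, K (k+2) = K (k+1) + K k. -/
def lucas : ℕ → ℕ
  | 0 => 2
  | 1 => 1
  | n + 2 => lucas (n + 1) + lucas n

/-- The Chung–Graham rule of expansion for even interval `d`,
with `A = lucas d - 1` and `B = Nat.fib (2 + d) - 1`.
Sequences are indexed from 1 (so `ε 0 = 0`) and finitely supported. -/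
def CGRule (d : ℕ) (ε : ℕ → ℕ) : Prop :=
  ε 0 = 0 ∧
  {k | ε k ≠ 0}.Finite ∧
  ε 1 ≤ Nat.fib (2 + d) - 1 ∧
  (∀ k, 2 ≤ k → ε k ≤ lucas d - 1) ∧
  (∀ m, 2 ≤ m → ε m = lucas d - 1 →
    (∀ k, 2 ≤ k → k ≤ m - 1 → ε k = lucas d - 1 - 1) →
    ε 1 < Nat.fib (2 + d) - 1) ∧
  (∀ k j, 2 ≤ k → k < j → ε k = lucas d - 1 → ε j = lucas d - 1 →
    ∃ c, k < c ∧ c < j ∧ ε c ≤ lucas d - 1 - 2)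

/-- Lexicographic-from-the-right strict order on coefficient sequences. -/
def CGlt (ε τ : ℕ → ℕ) : Prop :=
  ∃ ℓ, ε ℓ < τ ℓ ∧ ∀ k, ℓ < k → ε k = τ k

lemma lucas_add_two (n : ℕ) : lucas (n + 2) = lucas (n + 1) + lucas n := rfl

lemma lucas_aux : ∀ n : ℕ, 1 ≤ lucas (n + 1) ∧ 3 ≤ lucas (n + 2) := by
  intro n
  induction n with
  | zero => refine ⟨by norm_num [lucas], by norm_num [lucas]⟩
  | succ m ih =>
    have hh : lucas (m + 1 + 1) = lucas (m + 2) := rfl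
    have hh2 : lucas (m + 1 + 2) = lucas (m + 2) + lucas (m + 1) := rfl
    omega

lemma lucas_ge_three (d : ℕ) (hd : 2 ≤ d) : 3 ≤ lucas d := by
  obtain ⟨e, rfl⟩ : ∃ e, d = e + 2 := ⟨d - 2, by omega⟩
  exact (lucas_aux e).2

lemma fib_lucas_int : ∀ d : ℕ,
    (∀ x : ℕ, (Nat.fib (x + 2 * d) : ℤ) + (-1) ^ d * Nat.fib x = lucas d * Nat.fib (x + d)) ∧
    (∀ x : ℕ, (Nat.fib (x + 2 * (d + 1)) : ℤ) + (-1) ^ (d + 1) * Nat.fib x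
      = lucas (d + 1) * Nat.fib (x + (d + 1))) := by
  intro d
  induction d with
  | zero =>
    constructor
    · intro x; norm_num [lucas]; ring
    · intro x
      have f2 : Nat.fib (x + 2) = Nat.fib x + Nat.fib (x + 1) := Nat.fib_add_two
      norm_num [lucas, f2]
      try push_cast
      try ring
  | succ n ih =>
    refine ⟨ih.2, ?_⟩
    intro x
    have h1 := ih.2 (x + 1)
    have h2 := ih.1 (x + 2)
    have e1 : x + 1 + 2 * (n + 1) = x + 2 * n + 3 := by ring
    have e2 : x + 2 + 2 * n = x + 2 * n + 2 := by ring
    have e3 : x + 2 * (n + 1 + 1) = x + 2 * n + 4 := by ring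
    have e4 : x + 1 + (n + 1) = x + n + 2 := by ring
    have e5 : x + 2 + n = x + n + 2 := by ring
    have e6 : x + (n + 1 + 1) = x + n + 2 := by ring
    rw [e1, e4] at h1
    rw [e2, e5] at h2
    rw [e3, e6]
    have f1 : Nat.fib (x + 2 * n + 4) = Nat.fib (x + 2 * n + 2) + Nat.fib (x + 2 * n + 3) :=
      Nat.fib_add_two
    have f2 : Nat.fib (x + 2) = Nat.fib x + Nat.fib (x + 1) := Nat.fib_add_two
    rw [f2] at h2
    rw [lucas_add_two, f1]
    push_cast at h1 h2 ⊢
    linear_combination h1 + h2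

lemma fib_lucas_even (d : ℕ) (hde : Even d) (x : ℕ) :
    Nat.fib (x + 2 * d) + Nat.fib x = lucas d * Nat.fib (x + d) := by
  have h := (fib_lucas_int d).1 x
  rw [hde.neg_one_pow] at h
  have : ((Nat.fib (x + 2 * d) + Nat.fib x : ℕ) : ℤ) = ((lucas d * Nat.fib (x + d) : ℕ) : ℤ) := by
    push_cast
    linarith
  exact_mod_cast this

lemma vid (d : ℕ) (hde : Even d) (j : ℕ) :
    Nat.fib (2 + d * (j + 2)) + Nat.fib (2 + d * j) = lucas d * Nat.fib (2 + d * (j + 1)) := by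
  have h := fib_lucas_even d hde (2 + d * j)
  have e1 : 2 + d * j + 2 * d = 2 + d * (j + 2) := by ring
  have e2 : 2 + d * j + d = 2 + d * (j + 1) := by ring
  rw [e1, e2] at h
  exact h

lemma Gsum (d a b : ℕ) (ha : lucas d = a + 3) (hb : Nat.fib (2 + d) = b + 2) (hde : Even d) :
    ∀ m : ℕ, Nat.fib (2 + d * m) + (b + 1)
        + (a + 1) * (∑ j ∈ Finset.Icc 1 m, Nat.fib (2 + d * j)) = Nat.fib (2 + d * (m + 1)) := by
  intro m
  induction m with
  | zero =>
    simp [Nat.fib_two]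
    omega
  | succ m ih =>
    rw [Finset.sum_Icc_succ_top (by omega : 1 ≤ m + 1)]
    have hid := vid d hde m
    rw [ha] at hid
    set T := ∑ j ∈ Finset.Icc 1 m, Nat.fib (2 + d * j) with hT
    set v0 := Nat.fib (2 + d * m) with hv0
    set v1 := Nat.fib (2 + d * (m + 1)) with hv1
    set v2 := Nat.fib (2 + d * (m + 1 + 1)) with hv2
    have h1 : (a + 1) * (T + v1) = (a + 1) * T + (a + 1) * v1 := by ring
    have h2 : (a + 3) * v1 = (a + 1) * v1 + 2 * v1 := by ring
    have hid2 : v2 + v0 = (a + 3) * v1 := hid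
    rw [h1]
    rw [h2] at hid2
    generalize (a + 1) * T = X at ih ⊢
    generalize (a + 1) * v1 = Y at hid2 ⊢
    omega

lemma cg_key (d a b : ℕ) (ha : lucas d = a + 3) (hb : Nat.fib (2 + d) = b + 2) (hde : Even d)
    (e : ℕ → ℕ)
    (h1 : e 0 ≤ b + 1)
    (h2 : ∀ k, 1 ≤ k → e k ≤ a + 2)
    (h3 : ∀ m, 1 ≤ m → e m = a + 2 → (∀ k, 1 ≤ k → k < m → e k = a + 1) → e 0 ≤ b)
    (h4 : ∀ k j, 1 ≤ k → k < j → e k = a + 2 → e j = a + 2 → ∃ c, k < c ∧ c < j ∧ e c ≤ a) :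
    ∀ n, ∑ j ∈ Finset.range n, e j * Nat.fib (2 + d * j) < Nat.fib (2 + d * n) := by
  intro n
  induction n using Nat.strong_induction_on with
  | _ n ih =>
  match n with
  | 0 => simp [Nat.fib_two]
  | 1 => simp [Nat.fib_two]; omega
  | (m + 2) =>
    have hvm : Nat.fib (2 + d * m) ≤ Nat.fib (2 + d * (m + 1)) :=
      Nat.fib_mono (by have : d * m ≤ d * (m + 1) := Nat.mul_le_mul_left _ (by omega); omega)
    have hid := vid d hde m
    rw [ha] at hid
    have hG := Gsum d a b ha hb hde m
    rw [Finset.sum_range_succ]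
    by_cases hA : e (m + 1) = a + 2
    · by_cases hall : ∀ k, 1 ≤ k → k < m + 1 → e k = a + 1
      · have he0 : e 0 ≤ b := h3 (m + 1) (by omega) hA hall
        have hsplit : ∑ j ∈ Finset.range (m + 1), e j * Nat.fib (2 + d * j)
            = e 0 * Nat.fib 2 + ∑ j ∈ Finset.Icc 1 m, e j * Nat.fib (2 + d * j) := by
          rw [Finset.range_eq_Ico,
            Finset.sum_eq_sum_Ico_succ_bot (by omega : 0 < m + 1), Finset.Ico_add_one_right_eq_Icc]
          norm_num
        have hcongr : ∑ j ∈ Finset.Icc 1 m, e j * Nat.fib (2 + d * j)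
            = (a + 1) * ∑ j ∈ Finset.Icc 1 m, Nat.fib (2 + d * j) := by
          rw [Finset.mul_sum]
          refine Finset.sum_congr rfl fun k hk => ?_
          rw [Finset.mem_Icc] at hk
          rw [hall k hk.1 (by omega)]
        rw [hsplit, hcongr, hA, Nat.fib_two, mul_one]
        have h5 : (a + 3) * Nat.fib (2 + d * (m + 1))
            = (a + 2) * Nat.fib (2 + d * (m + 1)) + Nat.fib (2 + d * (m + 1)) := by ring
        rw [h5] at hid
        generalize (a + 1) * (∑ j ∈ Finset.Icc 1 m, Nat.fib (2 + d * j)) = X at hG ⊢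
        generalize (a + 2) * Nat.fib (2 + d * (m + 1)) = Y at hid ⊢
        omega
      · push_neg at hall
        obtain ⟨k0, hk01, hk02, hk03⟩ := hall
        have hPk0 : 1 ≤ k0 ∧ e k0 ≠ a + 1 := ⟨hk01, hk03⟩
        set j := Nat.findGreatest (fun k => 1 ≤ k ∧ e k ≠ a + 1) m with hjdef
        have hjspec : 1 ≤ j ∧ e j ≠ a + 1 :=
          Nat.findGreatest_spec (P := fun k => 1 ≤ k ∧ e k ≠ a + 1) (by omega : k0 ≤ m) hPk0
        have hjle : j ≤ m := Nat.findGreatest_le m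
        have hjmax : ∀ k, j < k → k ≤ m → e k = a + 1 := by
          intro k hk1 hk2
          by_contra hne
          exact Nat.findGreatest_is_greatest (P := fun k => 1 ≤ k ∧ e k ≠ a + 1) hk1 hk2
            ⟨by omega, hne⟩
        obtain ⟨hj1, hjne⟩ := hjspec
        by_cases hA2 : e j = a + 2
        · obtain ⟨c, hc1, hc2, hc3⟩ := h4 j (m + 1) hj1 (by omega) hA2 hA
          have := hjmax c hc1 (by omega)
          omega
        · have hja : e j ≤ a := by
            have := h2 j hj1
            omega
          have hsplit : ∑ i ∈ Finset.range (m + 1), e i * Nat.fib (2 + d * i)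
              = (∑ i ∈ Finset.range j, e i * Nat.fib (2 + d * i))
                + (e j * Nat.fib (2 + d * j)
                + ∑ i ∈ Finset.Icc (j + 1) m, e i * Nat.fib (2 + d * i)) := by
            rw [Finset.range_eq_Ico,
              ← Finset.sum_Ico_consecutive _ (by omega : 0 ≤ j) (by omega : j ≤ m + 1)]
            congr 1
            · rw [Finset.range_eq_Ico]
            rw [Finset.sum_eq_sum_Ico_succ_bot (by omega : j < m + 1), Finset.Ico_add_one_right_eq_Icc]
          have hcongr : ∑ i ∈ Finset.Icc (j + 1) m, e i * Nat.fib (2 + d * i)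
              = (a + 1) * ∑ i ∈ Finset.Icc (j + 1) m, Nat.fib (2 + d * i) := by
            rw [Finset.mul_sum]
            refine Finset.sum_congr rfl fun k hk => ?_
            rw [Finset.mem_Icc] at hk
            rw [hjmax k (by omega) hk.2]
          have hlow : ∑ i ∈ Finset.range j, e i * Nat.fib (2 + d * i)
              < Nat.fib (2 + d * j) := ih j (by omega)
          have hsub : Nat.fib (2 + d * j) + ∑ i ∈ Finset.Icc (j + 1) m, Nat.fib (2 + d * i)
              ≤ ∑ i ∈ Finset.Icc 1 m, Nat.fib (2 + d * i) := by
            have heq2 : Nat.fib (2 + d * j) + ∑ i ∈ Finset.Icc (j + 1) m, Nat.fib (2 + d * i)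
                = ∑ i ∈ Finset.Icc j m, Nat.fib (2 + d * i) := by
              rw [← Finset.Ico_add_one_right_eq_Icc j m, Finset.sum_eq_sum_Ico_succ_bot (by omega : j < m + 1),
                Finset.Ico_add_one_right_eq_Icc]
            rw [heq2]
            exact Finset.sum_le_sum_of_subset (Finset.Icc_subset_Icc hj1 le_rfl)
          have hmul : (a + 1) * (Nat.fib (2 + d * j)
                + ∑ i ∈ Finset.Icc (j + 1) m, Nat.fib (2 + d * i))
              ≤ (a + 1) * ∑ i ∈ Finset.Icc 1 m, Nat.fib (2 + d * i) :=
            Nat.mul_le_mul_left _ hsub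
          have hexp : (a + 1) * (Nat.fib (2 + d * j)
                + ∑ i ∈ Finset.Icc (j + 1) m, Nat.fib (2 + d * i))
              = a * Nat.fib (2 + d * j) + Nat.fib (2 + d * j)
                + (a + 1) * ∑ i ∈ Finset.Icc (j + 1) m, Nat.fib (2 + d * i) := by ring
          rw [hexp] at hmul
          have hej : e j * Nat.fib (2 + d * j) ≤ a * Nat.fib (2 + d * j) :=
            Nat.mul_le_mul_right _ hja
          have h5 : (a + 3) * Nat.fib (2 + d * (m + 1))
              = (a + 2) * Nat.fib (2 + d * (m + 1)) + Nat.fib (2 + d * (m + 1)) := by ring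
          rw [h5] at hid
          rw [hsplit, hcongr, hA]
          generalize (a + 1) * (∑ i ∈ Finset.Icc 1 m, Nat.fib (2 + d * i)) = X1 at hG hmul ⊢
          generalize (a + 1) * (∑ i ∈ Finset.Icc (j + 1) m, Nat.fib (2 + d * i)) = X2 at hmul ⊢
          generalize (a + 2) * Nat.fib (2 + d * (m + 1)) = Y at hid ⊢
          generalize a * Nat.fib (2 + d * j) = Z at hmul hej ⊢
          omega
    · have htop : e (m + 1) ≤ a + 1 := by
        have := h2 (m + 1) (by omega)
        omega
      have hS := ih (m + 1) (by omega)
      have hmul : e (m + 1) * Nat.fib (2 + d * (m + 1))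
          ≤ (a + 1) * Nat.fib (2 + d * (m + 1)) := Nat.mul_le_mul_right _ htop
      have h5 : (a + 3) * Nat.fib (2 + d * (m + 1))
          = (a + 1) * Nat.fib (2 + d * (m + 1)) + 2 * Nat.fib (2 + d * (m + 1)) := by ring
      rw [h5] at hid
      generalize (a + 1) * Nat.fib (2 + d * (m + 1)) = Y at hid hmul
      omega

lemma cg_fib_ge (d : ℕ) (hd : 2 ≤ d) : 2 ≤ Nat.fib (2 + d) := by
  calc 2 = Nat.fib 3 := by norm_num
  _ ≤ Nat.fib (2 + d) := Nat.fib_mono (by omega)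

lemma main_aux (d : ℕ) (hd : 2 ≤ d) (hde : Even d) (ε δ : ℕ → ℕ)
    (hε : CGRule d ε) (hδfin : {k | δ k ≠ 0}.Finite)
    (ℓ : ℕ) (hℓ : 1 ≤ ℓ) (hlt : ε ℓ < δ ℓ) (htail : ∀ k, ℓ < k → ε k = δ k)
    (heq : ∑ᶠ k, ε k * Nat.fib (2 + d * (k - 1)) =
           ∑ᶠ k, δ k * Nat.fib (2 + d * (k - 1))) :
    False := by
  obtain ⟨hε0, hεfin, hε1, hε2, hε3, hε4⟩ := hε
  obtain ⟨a, ha⟩ : ∃ a, lucas d = a + 3 :=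
    ⟨lucas d - 3, by have := lucas_ge_three d hd; omega⟩
  obtain ⟨b, hb⟩ : ∃ b, Nat.fib (2 + d) = b + 2 :=
    ⟨Nat.fib (2 + d) - 2, by have := cg_fib_ge d hd; omega⟩
  set s : Finset ℕ := hεfin.toFinset ∪ hδfin.toFinset with hs
  set N : ℕ := max (ℓ + 1) (s.sup id + 1) with hN
  have hNℓ : ℓ + 1 ≤ N := le_max_left _ _
  have hsupε : (Function.support fun k => ε k * Nat.fib (2 + d * (k - 1)))
      ⊆ ↑(Finset.range N) := by
    intro k hk
    simp only [Function.mem_support] at hk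
    have hk0 : ε k ≠ 0 := fun h => hk (by simp [h])
    have h1 : k ∈ s := Finset.mem_union_left _ (hεfin.mem_toFinset.2 hk0)
    have h2 : id k ≤ s.sup id := Finset.le_sup h1
    simp only [Finset.coe_range, Set.mem_Iio]
    simp only [id] at h2
    have := le_max_right (ℓ + 1) (s.sup id + 1)
    omega
  have hsupδ : (Function.support fun k => δ k * Nat.fib (2 + d * (k - 1)))
      ⊆ ↑(Finset.range N) := by
    intro k hk
    simp only [Function.mem_support] at hk
    have hk0 : δ k ≠ 0 := fun h => hk (by simp [h])
    have h1 : k ∈ s := Finset.mem_union_right _ (hδfin.mem_toFinset.2 hk0)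
    have h2 : id k ≤ s.sup id := Finset.le_sup h1
    simp only [Finset.coe_range, Set.mem_Iio]
    simp only [id] at h2
    have := le_max_right (ℓ + 1) (s.sup id + 1)
    omega
  rw [finsum_eq_sum_of_support_subset _ hsupε,
    finsum_eq_sum_of_support_subset _ hsupδ] at heq
  have hsplit : ∀ f : ℕ → ℕ, ∑ k ∈ Finset.range N, f k * Nat.fib (2 + d * (k - 1))
      = (∑ k ∈ Finset.range (ℓ + 1), f k * Nat.fib (2 + d * (k - 1)))
        + ∑ k ∈ Finset.Ico (ℓ + 1) N, f k * Nat.fib (2 + d * (k - 1)) := by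
    intro f
    rw [Finset.range_eq_Ico,
      ← Finset.sum_Ico_consecutive _ (by omega : 0 ≤ ℓ + 1) hNℓ]
    rw [Finset.range_eq_Ico]

  rw [hsplit ε, hsplit δ] at heq
  have htail' : ∑ k ∈ Finset.Ico (ℓ + 1) N, ε k * Nat.fib (2 + d * (k - 1))
      = ∑ k ∈ Finset.Ico (ℓ + 1) N, δ k * Nat.fib (2 + d * (k - 1)) := by
    refine Finset.sum_congr rfl fun k hk => ?_
    rw [Finset.mem_Ico] at hk
    rw [htail k (by omega)]
  have hhead : ∑ k ∈ Finset.range (ℓ + 1), ε k * Nat.fib (2 + d * (k - 1))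
      = ∑ k ∈ Finset.range (ℓ + 1), δ k * Nat.fib (2 + d * (k - 1)) := by omega
  obtain ⟨t, rfl⟩ : ∃ t, ℓ = t + 1 := ⟨ℓ - 1, by omega⟩
  -- translate CG conditions to the shifted sequence
  have hkey := cg_key d a b ha hb hde (fun i => ε (i + 1))
    (show ε 1 ≤ b + 1 by omega)
    (fun k hk => show ε (k + 1) ≤ a + 2 by have := hε2 (k + 1) (by omega); omega)
    (fun m hm hm2 hall => by
      show ε 1 ≤ b
      have hm2' : ε (m + 1) = lucas d - 1 := by
        have : ε (m + 1) = a + 2 := hm2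
        omega
      have hpre : ∀ k, 2 ≤ k → k ≤ (m + 1) - 1 → ε k = lucas d - 1 - 1 := by
        intro k hk2 hkm
        have h5 := hall (k - 1) (by omega) (by omega)
        have h6 : ε (k - 1 + 1) = a + 1 := h5
        have h7 : k - 1 + 1 = k := by omega
        rw [h7] at h6
        omega
      have := hε3 (m + 1) (by omega) hm2' hpre
      omega)
    (fun k j hk hkj hk2 hj2 => by
      have hk2' : ε (k + 1) = lucas d - 1 := by
        have : ε (k + 1) = a + 2 := hk2
        omega
      have hj2' : ε (j + 1) = lucas d - 1 := by
        have : ε (j + 1) = a + 2 := hj2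
        omega
      obtain ⟨c, hc1, hc2, hc3⟩ := hε4 (k + 1) (j + 1) (by omega) (by omega) hk2' hj2'
      refine ⟨c - 1, by omega, by omega, ?_⟩
      show ε (c - 1 + 1) ≤ a
      have h7 : c - 1 + 1 = c := by omega
      rw [h7]
      omega)
    t
  -- the low part of ε is small
  have hS : ∑ k ∈ Finset.range (t + 1), ε k * Nat.fib (2 + d * (k - 1))
      < Nat.fib (2 + d * t) := by
    rw [Finset.sum_range_succ']
    simp only [Nat.add_sub_cancel, hε0, zero_mul, add_zero]
    exact hkey
  have e1 := Finset.sum_range_succ (fun k => ε k * Nat.fib (2 + d * (k - 1))) (t + 1)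
  have e2 := Finset.sum_range_succ (fun k => δ k * Nat.fib (2 + d * (k - 1))) (t + 1)
  simp only [Nat.add_sub_cancel] at e1 e2
  rw [e1, e2] at hhead
  have hmul : (ε (t + 1) + 1) * Nat.fib (2 + d * t) ≤ δ (t + 1) * Nat.fib (2 + d * t) :=
    Nat.mul_le_mul_right _ (by omega)
  have hexp : (ε (t + 1) + 1) * Nat.fib (2 + d * t)
      = ε (t + 1) * Nat.fib (2 + d * t) + Nat.fib (2 + d * t) := by ring
  omega

theorem stmt_9 (d : ℕ) (hd : 0 < d) (hde : Even d) (ε δ : ℕ → ℕ)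
    (hε : CGRule d ε) (hδ : CGRule d δ)
    (heq : ∑ᶠ k, ε k * Nat.fib (2 + d * (k - 1)) =
           ∑ᶠ k, δ k * Nat.fib (2 + d * (k - 1))) :
    ε = δ := by
  have hd2 : 2 ≤ d := by obtain ⟨r, rfl⟩ := hde; omega
  by_contra hne
  have hεfin := hε.2.1
  have hδfin := hδ.2.1
  have hDfin : {k | ε k ≠ δ k}.Finite := by
    apply (hεfin.union hδfin).subset
    intro k hk
    simp only [Set.mem_setOf_eq] at hk
    simp only [Set.mem_union, Set.mem_setOf_eq]
    by_contra h
    push_neg at h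
    exact hk (by omega)
  have hDne : {k | ε k ≠ δ k}.Nonempty := by
    by_contra h
    rw [Set.not_nonempty_iff_eq_empty] at h
    apply hne
    funext k
    by_contra hk
    have : k ∈ {k | ε k ≠ δ k} := hk
    rw [h] at this
    exact this
  have hne' : hDfin.toFinset.Nonempty := by rwa [Set.Finite.toFinset_nonempty]
  set ℓ := hDfin.toFinset.max' hne' with hℓdef
  have hℓmem : ε ℓ ≠ δ ℓ := by
    have := hDfin.toFinset.max'_mem hne'
    rwa [Set.Finite.mem_toFinset] at this
  have htail : ∀ k, ℓ < k → ε k = δ k := by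
    intro k hk
    by_contra hkne
    have h1 : k ∈ hDfin.toFinset := (Set.Finite.mem_toFinset _).2 hkne
    have := hDfin.toFinset.le_max' k h1
    omega
  have hℓ1 : 1 ≤ ℓ := by
    rcases Nat.eq_zero_or_pos ℓ with h0 | h
    · rw [h0, hε.1, hδ.1] at hℓmem
      exact absurd rfl hℓmem
    · exact h
  rcases lt_trichotomy (ε ℓ) (δ ℓ) with h | h | h
  · exact main_aux d hd2 hde ε δ hε hδfin ℓ hℓ1 h htail heq
  · exact hℓmem h
  · exact main_aux d hd2 hde δ ε hδ hεfin ℓ hℓ1 h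
      (fun k hk => (htail k hk).symm) heq.symm
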